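/- arXiv:2305.11135 — 2 statements merged into one kernel-verified Lean document; each statement's English description precedes it below -/
import Mathlib

section
/- Let d ≥ 1 be an integer, let x ∈ ℝ^d, let k be an integer with 1 ≤ k ≤ d, and let S ⊆ {1,…,d} be a top-k support of x. Then the squared Euclidean norm of the discarded part satisfies ∑_{j ∉ S} x_j² ≤ (1 − k/d) · ∑_{j=1}^d x_j²; equivalently, ‖x − Top_k(x)‖² ≤ (1 − k/d)‖x‖², where ‖·‖ denotes the Euclidean norm. -/
open Finset

theorem topk_contraction
    (d : ℕ) (hd : 1 ≤ d) (x : EuclideanSpace ℝ (Fin d))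
    (k : ℕ) (hk1 : 1 ≤ k) (hkd : k ≤ d)
    (S : Finset (Fin d)) (hScard : S.card = k)
    (hStop : ∀ i ∈ S, ∀ j ∉ S, |x j| ≤ |x i|)
    (topk : EuclideanSpace ℝ (Fin d))
    (htopk : ∀ i, topk i = if i ∈ S then x i else 0) :
    (∑ j ∈ Sᶜ, (x j) ^ 2 ≤ (1 - (k : ℝ) / d) * ∑ j, (x j) ^ 2) ∧
      ‖x - topk‖ ^ 2 ≤ (1 - (k : ℝ) / d) * ‖x‖ ^ 2 := by
  have hd0 : (0:ℝ) < d := by exact_mod_cast hd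
  have hsq : ∀ i ∈ S, ∀ j ∉ S, (x j)^2 ≤ (x i)^2 := by
    intro i hi j hj
    have h := hStop i hi j hj
    nlinarith [abs_nonneg (x j), sq_abs (x i), sq_abs (x j)]
  have hcc : (Sᶜ).card = d - k := by
    simp [Finset.card_compl, hScard]
  have key : (k:ℝ) * ∑ j ∈ Sᶜ, (x j)^2 ≤ ((d:ℝ) - k) * ∑ i ∈ S, (x i)^2 := by
    have hdk : ((d - k : ℕ):ℝ) = (d:ℝ) - k := by
      push_cast [Nat.cast_sub hkd]; ring
    calc (k:ℝ) * ∑ j ∈ Sᶜ, (x j)^2 = ∑ j ∈ Sᶜ, ∑ i ∈ S, (x j)^2 := by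
          simp [Finset.sum_const, hScard, Finset.mul_sum, mul_comm]
      _ ≤ ∑ j ∈ Sᶜ, ∑ i ∈ S, (x i)^2 :=
          Finset.sum_le_sum fun j hj =>
            Finset.sum_le_sum fun i hi => hsq i hi j (Finset.mem_compl.mp hj)
      _ = ((d:ℝ) - k) * ∑ i ∈ S, (x i)^2 := by
          simp [Finset.sum_const, hcc, hdk]
  have htot : ∑ i ∈ S, (x i)^2 + ∑ j ∈ Sᶜ, (x j)^2 = ∑ j, (x j)^2 :=
    Finset.sum_add_sum_compl S _
  have main : ∑ j ∈ Sᶜ, (x j)^2 ≤ (1 - (k:ℝ)/d) * ∑ j, (x j)^2 := by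
    rw [← htot]
    have h1 : (1 - (k:ℝ)/d) = ((d:ℝ) - k)/d := by field_simp
    rw [h1, div_mul_eq_mul_div, le_div_iff₀ hd0]
    nlinarith [key]
  refine ⟨main, ?_⟩
  have hnx : ‖x‖^2 = ∑ j, (x j)^2 := by
    rw [EuclideanSpace.norm_eq, Real.sq_sqrt (by positivity)]
    simp [sq_abs]
  have hny : ‖x - topk‖^2 = ∑ j ∈ Sᶜ, (x j)^2 := by
    rw [EuclideanSpace.norm_eq, Real.sq_sqrt (by positivity)]
    rw [← Finset.sum_add_sum_compl S]
    have h1 : ∀ j ∈ S, ‖(x - topk) j‖^2 = 0 := by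
      intro j hj
      simp [htopk j, hj]
    have h2 : ∀ j ∈ Sᶜ, ‖(x - topk) j‖^2 = (x j)^2 := by
      intro j hj
      rw [Finset.mem_compl] at hj
      simp [htopk j, hj, sq_abs]
    rw [Finset.sum_congr rfl h1, Finset.sum_congr rfl h2]
    simp
  rw [hnx, hny]
  exact main
end

section
/- Let d ≥ 1, let λ ∈ (0,1], and let Comp : ℝ^d → ℝ^d be any map satisfying the λ-contraction property ‖x − Comp(x)‖² ≤ (1 − λ)‖x‖² for all x ∈ ℝ^d. Let Q ≥ 1 be an integer, let G > 0, ξ > 0, and let a > 4Q/λ, and set η_t = ξ/(a + t) for t = 0, 1, 2, …. Let (Δ_t)_{t≥0} be any sequence in ℝ^d with ‖Δ_t‖ ≤ η_t Q G for all t, and define the memory sequence by m_0 = 0 and m_{t+1} = (m_t + Δ_t) − Comp(m_t + Δ_t). Then there exists a constant C with C ≥ 4aλ(1 − λ²)/(aλ − 4Q) such that for all t ≥ 0, ‖m_t‖² ≤ 4 (η_t)² C Q² G² / λ². -/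
set_option maxHeartbeats 800000 in
theorem memory_contraction
    (d : ℕ) (hd : 1 ≤ d)
    (lam : ℝ) (hlam0 : 0 < lam) (hlam1 : lam ≤ 1)
    (Comp : EuclideanSpace ℝ (Fin d) → EuclideanSpace ℝ (Fin d))
    (hComp : ∀ x : EuclideanSpace ℝ (Fin d), ‖x - Comp x‖ ^ 2 ≤ (1 - lam) * ‖x‖ ^ 2)
    (Q : ℕ) (hQ : 1 ≤ Q) (G ξ a : ℝ) (hG : 0 < G) (hξ : 0 < ξ)
    (ha : a > 4 * Q / lam)
    (η : ℕ → ℝ) (hη : ∀ t, η t = ξ / (a + t))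
    (Δ : ℕ → EuclideanSpace ℝ (Fin d)) (hΔ : ∀ t, ‖Δ t‖ ≤ η t * Q * G)
    (m : ℕ → EuclideanSpace ℝ (Fin d)) (hm0 : m 0 = 0)
    (hmrec : ∀ t, m (t + 1) = (m t + Δ t) - Comp (m t + Δ t)) :
    ∃ C : ℝ, C ≥ 4 * a * lam * (1 - lam ^ 2) / (a * lam - 4 * Q) ∧
      ∀ t, ‖m t‖ ^ 2 ≤ 4 * (η t) ^ 2 * C * Q ^ 2 * G ^ 2 / lam ^ 2 := by
  obtain ⟨C, hC4, hCge⟩ :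
      ∃ C : ℝ, 4 ≤ C ∧ C ≥ 4 * a * lam * (1 - lam ^ 2) / (a * lam - 4 * Q) :=
    ⟨max 4 (4 * a * lam * (1 - lam ^ 2) / (a * lam - 4 * Q)), le_max_left _ _, le_max_right _ _⟩
  have hC0 : (0:ℝ) ≤ C := by linarith
  have hQ1 : (1:ℝ) ≤ (Q:ℝ) := by exact_mod_cast hQ
  set D : ℝ := (Q:ℝ) * G with hDdef
  have hD : (0:ℝ) < D := by positivity
  have ha0 : 0 < a := lt_of_le_of_lt (by positivity) ha
  have hla : 4 ≤ lam * a := by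
    have h4Q : 4 * (Q:ℝ) / lam < a := ha
    rw [div_lt_iff₀ hlam0] at h4Q
    nlinarith
  have hsC : 2 ≤ Real.sqrt C := by
    have h := Real.sqrt_le_sqrt hC4
    rwa [show (4:ℝ) = 2^2 by norm_num, Real.sqrt_sq (by norm_num : (0:ℝ) ≤ 2)] at h
  set B : ℝ := 2 * Real.sqrt C * D / lam with hBdef
  have hB0 : 0 < B := by
    have h : 0 < Real.sqrt C := by linarith
    rw [hBdef]; positivity
  have hB2 : B ^ 2 = 4 * C * D ^ 2 / lam ^ 2 := by
    rw [hBdef, div_pow, mul_pow, mul_pow, Real.sq_sqrt hC0]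
    ring
  have hlamB : lam * B = 2 * Real.sqrt C * D := by
    rw [hBdef]; field_simp
  have hDB : D ≤ lam * B / 4 := by nlinarith
  clear_value B
  clear hBdef hlamB hsC
  have hη0 : ∀ t : ℕ, 0 < η t := by
    intro t
    rw [hη]
    have : (0:ℝ) < a + t := by positivity
    positivity
  have key : ∀ t, ‖m t‖ ≤ η t * B := by
    intro t
    induction t with
    | zero =>
      rw [hm0]
      simpa using mul_nonneg (hη0 0).le hB0.le
    | succ t ih =>
      have hx : ‖m t + Δ t‖ ≤ η t * (B + D) := by
        have h1 : ‖Δ t‖ ≤ η t * D := by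
          have := hΔ t
          rw [hDdef, ← mul_assoc]
          exact this
        calc ‖m t + Δ t‖ ≤ ‖m t‖ + ‖Δ t‖ := norm_add_le _ _
          _ ≤ η t * B + η t * D := add_le_add ih h1
          _ = η t * (B + D) := by ring
      have hstep : ‖m (t+1)‖ ≤ (1 - lam/2) * ‖m t + Δ t‖ := by
        have h1 : ‖m (t+1)‖ ^ 2 ≤ ((1 - lam/2) * ‖m t + Δ t‖) ^ 2 := by
          rw [hmrec t]
          have := hComp (m t + Δ t)
          nlinarith [norm_nonneg (m t + Δ t)]
        have h2 : 0 ≤ (1 - lam/2) * ‖m t + Δ t‖ :=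
          mul_nonneg (by linarith) (norm_nonneg _)
        nlinarith [norm_nonneg (m (t+1))]
      have hu : (0:ℝ) < a + t := by positivity
      have hu1 : (0:ℝ) < a + t + 1 := by positivity
      have hlu : 4 ≤ lam * (a + t) := by nlinarith [(Nat.cast_nonneg t : (0:ℝ) ≤ t)]
      have hpoly : (1 - lam/2) * (B + D) * (a + t + 1) ≤ B * (a + t) := by
        have hBD0 : 0 ≤ B + D := by linarith
        have hc1 : 0 ≤ (1 - lam/2) * (B + D) :=
          mul_nonneg (by linarith) hBD0
        have h1 : a + t + 1 ≤ (1 + lam/4) * (a + t) := by nlinarith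
        have h2 : (1 - lam/4) * (B + D) ≤ B := by nlinarith
        calc (1 - lam/2) * (B + D) * (a + t + 1)
            ≤ (1 - lam/2) * (B + D) * ((1 + lam/4) * (a + t)) :=
              mul_le_mul_of_nonneg_left h1 hc1
          _ = ((1 - lam/2) * (1 + lam/4)) * ((B + D) * (a + t)) := by ring
          _ ≤ (1 - lam/4) * ((B + D) * (a + t)) := by
              nlinarith [mul_nonneg hBD0 hu.le, sq_nonneg lam]
          _ = ((1 - lam/4) * (B + D)) * (a + t) := by ring
          _ ≤ B * (a + t) := mul_le_mul_of_nonneg_right h2 hu.le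
      have hchain : (1 - lam/2) * (η t * (B + D)) ≤ η (t+1) * B := by
        rw [hη, hη]
        push_cast
        rw [show (1 - lam/2) * (ξ / (a + (t:ℝ)) * (B + D)) =
              ((1 - lam/2) * ξ * (B + D)) / (a + (t:ℝ)) by ring,
            show ξ / (a + ((t:ℝ) + 1)) * B = (ξ * B) / (a + (t:ℝ) + 1) by ring,
            div_le_div_iff₀ hu hu1]
        calc (1 - lam/2) * ξ * (B + D) * (a + (t:ℝ) + 1)
            = ξ * ((1 - lam/2) * (B + D) * (a + (t:ℝ) + 1)) := by ring
          _ ≤ ξ * (B * (a + (t:ℝ))) := mul_le_mul_of_nonneg_left hpoly hξ.le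
          _ = ξ * B * (a + (t:ℝ)) := by ring
      calc ‖m (t+1)‖ ≤ (1 - lam/2) * ‖m t + Δ t‖ := hstep
        _ ≤ (1 - lam/2) * (η t * (B + D)) :=
            mul_le_mul_of_nonneg_left hx (by linarith)
        _ ≤ η (t+1) * B := hchain
  refine ⟨C, hCge, fun t => ?_⟩
  have h1 : ‖m t‖ ^ 2 ≤ (η t * B) ^ 2 := by
    nlinarith [key t, norm_nonneg (m t)]
  calc ‖m t‖ ^ 2 ≤ (η t * B) ^ 2 := h1
    _ = η t ^ 2 * B ^ 2 := by ring
    _ = 4 * (η t) ^ 2 * C * Q ^ 2 * G ^ 2 / lam ^ 2 := by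
        rw [hB2, hDdef]; ring
end
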